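/- Let M be a nonnegative irreducible aperiodic row-finite matrix with finite Perron value λ_M, and suppose lim_n m_{11}(n)/λ_M^n = μ exists with 0 ≤ μ ≤ 1. Then for N = M + E, lim_n n_{11}(n)/(λ_M+1)^n = μ, where n_{11}(n) = ∑_{k=0}^n binomial(n,k) m_{11}(k). -/

import Mathlib

open scoped BigOperators
open Filter Topology

/-- Powers of a nonnegative-integer matrix indexed by a countable set. -/
noncomputable def matPowN {P : Type*} [DecidableEq P] (M : P → P → ℕ) : ℕ → P → P → ℕ
  | 0 => fun i j => if i = j then 1 else 0
  | n + 1 => fun i j => ∑ᶠ k, M i k * matPowN M n k j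

theorem stmt8 {P : Type*} [DecidableEq P] [Countable P]
    (M : P → P → ℕ)
    (hrow : ∀ i, {j | M i j ≠ 0}.Finite)
    (hirr : ∀ i j : P, ∃ n, 0 < matPowN M n i j)
    (haper : ∀ i : P, ∀ d : ℕ, (∀ n, 1 ≤ n → 0 < matPowN M n i i → d ∣ n) → d = 1)
    (lamM : ℝ) (hlamM : 0 < lamM)
    (hPerron : ∀ i : P,
      IsLUB {x : ℝ | ∃ n : ℕ, 1 ≤ n ∧ x = ((matPowN M n i i : ℕ) : ℝ) ^ ((1 : ℝ) / (n : ℝ))} lamM)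
    (one : P) (μ : ℝ) (hμ0 : 0 ≤ μ) (hμ1 : μ ≤ 1)
    (hμ : Filter.Tendsto (fun n : ℕ => ((matPowN M n one one : ℕ) : ℝ) / lamM ^ n)
      Filter.atTop (nhds μ)) :
    Filter.Tendsto
      (fun n : ℕ =>
        (∑ k ∈ Finset.range (n + 1), (n.choose k : ℝ) * ((matPowN M k one one : ℕ) : ℝ)) /
          (lamM + 1) ^ n)
      Filter.atTop (nhds μ) := by
  have hlp : (0:ℝ) < lamM + 1 := by linarith
  have hl1 : (1:ℝ) < lamM + 1 := by linarith
  set a : ℕ → ℝ := fun k => ((matPowN M k one one : ℕ) : ℝ) / lamM ^ k with ha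
  set w : ℕ → ℕ → ℝ := fun n k => (n.choose k : ℝ) * lamM ^ k / (lamM + 1) ^ n with hw
  have hw0 : ∀ n k, 0 ≤ w n k := fun n k =>
    div_nonneg (mul_nonneg (Nat.cast_nonneg _) (pow_nonneg hlamM.le _)) (pow_nonneg hlp.le _)
  have hwsum : ∀ n, ∑ k ∈ Finset.range (n+1), w n k = 1 := by
    intro n
    rw [← Finset.sum_div, div_eq_one_iff_eq (pow_ne_zero _ hlp.ne')]
    rw [add_pow]
    exact Finset.sum_congr rfl fun k _ => by ring
  have hfeq : ∀ n, (∑ k ∈ Finset.range (n + 1),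
      (n.choose k : ℝ) * ((matPowN M k one one : ℕ) : ℝ)) / (lamM + 1) ^ n
      = ∑ k ∈ Finset.range (n+1), w n k * a k := by
    intro n
    rw [Finset.sum_div]
    refine Finset.sum_congr rfl fun k _ => ?_
    have hm : ((matPowN M k one one : ℕ) : ℝ) = a k * lamM ^ k := by
      rw [ha]; field_simp
    rw [hm, hw]; ring
  rw [Metric.tendsto_atTop] at hμ ⊢
  intro ε hε
  obtain ⟨K, hK⟩ := hμ (ε/2) (by linarith)
  have hhead : Tendsto (fun n => ∑ k ∈ Finset.range K, w n k * |a k - μ|) atTop (𝓝 0) := by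
    have h0 : ∀ k, Tendsto (fun n => w n k * |a k - μ|) atTop (𝓝 0) := by
      intro k
      have hgeo : Tendsto (fun n : ℕ => (n:ℝ)^k / (lamM+1)^n * (lamM ^ k * |a k - μ|))
          atTop (𝓝 0) := by
        simpa using (tendsto_pow_const_div_const_pow_of_one_lt k hl1).mul_const
          (lamM ^ k * |a k - μ|)
      refine squeeze_zero (fun n => mul_nonneg (hw0 n k) (abs_nonneg _)) (fun n => ?_) hgeo
      have hC : ((n.choose k : ℕ) : ℝ) ≤ (n:ℝ)^k := by
        exact_mod_cast Nat.cast_le.2 (Nat.choose_le_pow n k)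
      have hwb : w n k ≤ (n:ℝ)^k * lamM ^ k / (lamM + 1) ^ n := by
        simp only [hw]; gcongr
      have heq : (n:ℝ)^k / (lamM+1)^n * (lamM ^ k * |a k - μ|)
          = (n:ℝ)^k * lamM ^ k / (lamM + 1) ^ n * |a k - μ| := by ring
      rw [heq]
      exact mul_le_mul_of_nonneg_right hwb (abs_nonneg _)
    simpa using tendsto_finset_sum (Finset.range K) (fun k _ => h0 k)
  rw [Metric.tendsto_atTop] at hhead
  obtain ⟨N, hN⟩ := hhead (ε/2) (by linarith)
  refine ⟨max K N, fun n hn => ?_⟩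
  have hnK : K ≤ n := le_trans (le_max_left _ _) hn
  have hnN : N ≤ n := le_trans (le_max_right _ _) hn
  rw [Real.dist_eq, hfeq n]
  have key : (∑ k ∈ Finset.range (n+1), w n k * a k) - μ
      = ∑ k ∈ Finset.range (n+1), w n k * (a k - μ) := by
    have : ∑ k ∈ Finset.range (n+1), w n k * (a k - μ)
        = (∑ k ∈ Finset.range (n+1), w n k * a k)
          - (∑ k ∈ Finset.range (n+1), w n k) * μ := by
      rw [Finset.sum_mul, ← Finset.sum_sub_distrib]
      exact Finset.sum_congr rfl fun k _ => by ring
    rw [this, hwsum n, one_mul]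
  rw [key]
  have h1 : |∑ k ∈ Finset.range (n+1), w n k * (a k - μ)|
      ≤ ∑ k ∈ Finset.range (n+1), w n k * |a k - μ| := by
    refine (Finset.abs_sum_le_sum_abs _ _).trans ?_
    refine Finset.sum_le_sum fun k _ => ?_
    rw [abs_mul, abs_of_nonneg (hw0 n k)]
  have hsplit : ∑ k ∈ Finset.range (n+1), w n k * |a k - μ|
      = (∑ k ∈ Finset.range K, w n k * |a k - μ|)
        + ∑ k ∈ Finset.Ico K (n+1), w n k * |a k - μ| :=
    (Finset.sum_range_add_sum_Ico _ (by omega)).symm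
  have hfirst : ∑ k ∈ Finset.range K, w n k * |a k - μ| < ε/2 := by
    have := hN n hnN
    rw [Real.dist_eq, sub_zero] at this
    exact lt_of_le_of_lt (le_abs_self _) this
  have hsecond : ∑ k ∈ Finset.Ico K (n+1), w n k * |a k - μ| ≤ ε/2 := by
    have h2 : ∑ k ∈ Finset.Ico K (n+1), w n k * |a k - μ|
        ≤ ∑ k ∈ Finset.Ico K (n+1), w n k * (ε/2) := by
      refine Finset.sum_le_sum fun k hk => ?_
      have hk' : K ≤ k := (Finset.mem_Ico.1 hk).1
      have := hK k hk'
      rw [Real.dist_eq] at this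
      exact mul_le_mul_of_nonneg_left this.le (hw0 n k)
    refine h2.trans ?_
    rw [← Finset.sum_mul]
    have h3 : ∑ k ∈ Finset.Ico K (n+1), w n k ≤ 1 := by
      rw [← hwsum n]
      refine Finset.sum_le_sum_of_subset_of_nonneg ?_ (fun k _ _ => hw0 n k)
      intro k hk
      rw [Finset.mem_range]
      exact (Finset.mem_Ico.1 hk).2
    calc (∑ k ∈ Finset.Ico K (n+1), w n k) * (ε/2) ≤ 1 * (ε/2) := by
          exact mul_le_mul_of_nonneg_right h3 (by linarith)
      _ = ε/2 := one_mul _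
  have : |∑ k ∈ Finset.range (n+1), w n k * (a k - μ)|
      < ε/2 + ε/2 := by
    rw [hsplit] at h1
    exact lt_of_le_of_lt h1 (add_lt_add_of_lt_of_le hfirst hsecond)
  linarith
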